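/- Let N be a natural number and let v ∈ ℂ^{N+1} be a nonzero vector with J_N v = μ v for some μ ∈ ℂ. Then v is an eigenvector of the symmetric Pascal matrix T_N: there exists λ ∈ ℂ with T_N v = λ v. -/

import Mathlib

noncomputable section

/-- The `(N+1) × (N+1)` symmetric Pascal matrix, with entries `binom(j+k, j)`. -/
def pascalMatrix (R : Type*) [Semiring R] (N : ℕ) :
    Matrix (Fin (N + 1)) (Fin (N + 1)) R :=
  fun j k => (Nat.choose ((j : ℕ) + (k : ℕ)) (j : ℕ) : R)

/-- Off-diagonal entry `a(n) = (N+1)²n - n³` of the Jacobi matrix `J_N`. -/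
def aEnt (N n : ℕ) : ℂ := ((N : ℂ) + 1) ^ 2 * (n : ℂ) - (n : ℂ) ^ 3

/-- Diagonal entry `b(n) = 2n³ + 3n² + 2n - (N+1)²n` of the Jacobi matrix `J_N`. -/
def bEnt (N n : ℕ) : ℂ :=
  2 * (n : ℂ) ^ 3 + 3 * (n : ℂ) ^ 2 + 2 * (n : ℂ) - ((N : ℂ) + 1) ^ 2 * (n : ℂ)

/-- The `(N+1) × (N+1)` tridiagonal matrix `J_N`, with `(J_N)_{n,n} = b(n)` and
`(J_N)_{n,n-1} = (J_N)_{n-1,n} = a(n)`. -/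
def jacobiMatrix (N : ℕ) : Matrix (Fin (N + 1)) (Fin (N + 1)) ℂ :=
  fun m n =>
    if (m : ℕ) = (n : ℕ) then bEnt N (m : ℕ)
    else if (m : ℕ) + 1 = (n : ℕ) then aEnt N (n : ℕ)
    else if (n : ℕ) + 1 = (m : ℕ) then aEnt N (m : ℕ)
    else 0

lemma aEnt_zero (N : ℕ) : aEnt N 0 = 0 := by simp [aEnt]

lemma aEnt_top (N : ℕ) : aEnt N (N + 1) = 0 := by
  unfold aEnt; push_cast; ring

lemma aEnt_ne_zero (N m : ℕ) (h1 : 1 ≤ m) (h2 : m ≤ N) : aEnt N m ≠ 0 := by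
  have he : aEnt N m = ((m * ((N + 1 - m) * (N + 1 + m)) : ℕ) : ℂ) := by
    have hm : m ≤ N + 1 := by omega
    unfold aEnt
    push_cast [Nat.cast_sub hm]
    ring
  rw [he]
  have hpos : 0 < m * ((N + 1 - m) * (N + 1 + m)) := by
    apply Nat.mul_pos (by omega) (Nat.mul_pos (by omega) (by omega))
  exact Nat.cast_ne_zero.mpr (Nat.pos_iff_ne_zero.mp hpos)

-- binomial identities (nat form)
lemma nbinom1 (j k : ℕ) :
    (j + k) * Nat.choose (j + k - 1) k = j * Nat.choose (j + k) k := by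
  rcases Nat.eq_zero_or_pos j with hj | hj
  · subst hj
    rcases Nat.eq_zero_or_pos k with hk | hk
    · subst hk; simp
    · rw [Nat.choose_eq_zero_of_lt (by omega)]; simp
  · obtain ⟨j', rfl⟩ : ∃ j', j = j' + 1 := ⟨j - 1, by omega⟩
    have h := Nat.add_one_mul_choose_eq (j' + k) j'
    have hsym : Nat.choose (j' + k) j' = Nat.choose (j' + k) k := by
      rw [← Nat.choose_symm (by omega : j' ≤ j' + k)]; congr 1; omega
    have e2 : Nat.choose (j' + k + 1) (j' + 1) = Nat.choose (j' + 1 + k) k := by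
      rw [← Nat.choose_symm (by omega : j' + 1 ≤ j' + k + 1)]; congr 1 <;> omega
    have e1 : j' + 1 + k - 1 = j' + k := by omega
    rw [e1, ← hsym]
    have h' : (j' + k + 1) * Nat.choose (j' + k) j'
        = Nat.choose (j' + 1 + k) k * (j' + 1) := by
      rw [← e2]; exact_mod_cast h
    calc (j' + 1 + k) * Nat.choose (j' + k) j'
        = (j' + k + 1) * Nat.choose (j' + k) j' := by ring_nf
      _ = Nat.choose (j' + 1 + k) k * (j' + 1) := h'
      _ = (j' + 1) * Nat.choose (j' + 1 + k) k := by ring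

lemma nbinom2 (j k : ℕ) :
    (j + 1) * Nat.choose (j + k + 1) k = (j + k + 1) * Nat.choose (j + k) k := by
  have h := Nat.add_one_mul_choose_eq (j + k) j
  have hsym : Nat.choose (j + k) j = Nat.choose (j + k) k := by
    rw [← Nat.choose_symm (by omega : j ≤ j + k)]; congr 1; omega
  have e2 : Nat.choose (j + k + 1) (j + 1) = Nat.choose (j + k + 1) k := by
    rw [← Nat.choose_symm (by omega : j + 1 ≤ j + k + 1)]; congr 1; omega
  have h' : (j + k + 1) * Nat.choose (j + k) j = Nat.choose (j + k + 1) (j + 1) * (j + 1) := h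
  rw [e2, hsym] at h'
  rw [h']; ring

lemma key_symm (N j k : ℕ) :
    aEnt N j * (Nat.choose (j + k - 1) k : ℂ) + bEnt N j * (Nat.choose (j + k) k : ℂ)
      + aEnt N (j + 1) * (Nat.choose (j + k + 1) k : ℂ)
    = aEnt N k * (Nat.choose (j + k - 1) j : ℂ) + bEnt N k * (Nat.choose (j + k) j : ℂ)
      + aEnt N (k + 1) * (Nat.choose (j + k + 1) j : ℂ) := by
  rcases Nat.eq_zero_or_pos (j + k) with h0 | h0
  · obtain ⟨rfl, rfl⟩ : j = 0 ∧ k = 0 := by omega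
    rfl
  · have hc : Nat.choose (j + k) j = Nat.choose (j + k) k := by
      rw [← Nat.choose_symm (by omega : j ≤ j + k)]; congr 1; omega
    have hjk : ((j : ℂ) + k) ≠ 0 := by
      have : ((j + k : ℕ) : ℂ) ≠ 0 := Nat.cast_ne_zero.mpr (by omega)
      push_cast at this; exact this
    have hj1 : ((j : ℂ) + 1) ≠ 0 := by
      have : ((j + 1 : ℕ) : ℂ) ≠ 0 := Nat.cast_ne_zero.mpr (by omega)
      push_cast at this; exact this
    have hk1 : ((k : ℂ) + 1) ≠ 0 := by
      have : ((k + 1 : ℕ) : ℂ) ≠ 0 := Nat.cast_ne_zero.mpr (by omega)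
      push_cast at this; exact this
    -- cast the nat identities
    have e1 : ((j : ℂ) + k) * (Nat.choose (j + k - 1) k : ℂ)
        = (j : ℂ) * (Nat.choose (j + k) k : ℂ) := by
      exact_mod_cast congrArg (Nat.cast : ℕ → ℂ) (nbinom1 j k)
    have e2 : ((j : ℂ) + 1) * (Nat.choose (j + k + 1) k : ℂ)
        = ((j : ℂ) + k + 1) * (Nat.choose (j + k) k : ℂ) := by
      exact_mod_cast congrArg (Nat.cast : ℕ → ℂ) (nbinom2 j k)
    have e3 : ((j : ℂ) + k) * (Nat.choose (j + k - 1) j : ℂ)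
        = (k : ℂ) * (Nat.choose (j + k) k : ℂ) := by
      have := nbinom1 k j
      rw [Nat.add_comm k j] at this
      have := congrArg (Nat.cast : ℕ → ℂ) this
      push_cast at this
      rw [← hc]
      linear_combination this
    have e4 : ((k : ℂ) + 1) * (Nat.choose (j + k + 1) j : ℂ)
        = ((j : ℂ) + k + 1) * (Nat.choose (j + k) k : ℂ) := by
      have := nbinom2 k j
      rw [Nat.add_comm k j] at this
      have := congrArg (Nat.cast : ℕ → ℂ) this
      push_cast at this
      rw [← hc]
      linear_combination this
    rw [hc]
    have hp : (Nat.choose (j + k - 1) k : ℂ)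
        = (j : ℂ) * (Nat.choose (j + k) k : ℂ) / ((j : ℂ) + k) := by
      field_simp; linear_combination e1
    have hq : (Nat.choose (j + k + 1) k : ℂ)
        = ((j : ℂ) + k + 1) * (Nat.choose (j + k) k : ℂ) / ((j : ℂ) + 1) := by
      field_simp; linear_combination e2
    have hp' : (Nat.choose (j + k - 1) j : ℂ)
        = (k : ℂ) * (Nat.choose (j + k) k : ℂ) / ((j : ℂ) + k) := by
      field_simp; linear_combination e3
    have hq' : (Nat.choose (j + k + 1) j : ℂ)
        = ((j : ℂ) + k + 1) * (Nat.choose (j + k) k : ℂ) / ((k : ℂ) + 1) := by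
      field_simp; linear_combination e4
    rw [hp, hq, hp', hq']
    unfold aEnt bEnt
    push_cast
    field_simp
    ring

/-- Extension of a vector on `Fin (N+1)` to `ℕ` by zero. -/
def extc (N : ℕ) (u : Fin (N + 1) → ℂ) (i : ℕ) : ℂ :=
  if h : i < N + 1 then u ⟨i, h⟩ else 0

lemma jac_mulVec (N : ℕ) (u : Fin (N + 1) → ℂ) (n : Fin (N + 1)) :
    (jacobiMatrix N).mulVec u n
      = aEnt N (n : ℕ) * extc N u ((n : ℕ) - 1) + bEnt N (n : ℕ) * u n
        + aEnt N ((n : ℕ) + 1) * extc N u ((n : ℕ) + 1) := by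
  have hsplit : ∀ m : Fin (N + 1), jacobiMatrix N n m * u m =
      (if (n : ℕ) = (m : ℕ) then bEnt N (n : ℕ) * u m else 0)
      + ((if ((m : ℕ)) + 1 = (n : ℕ) then aEnt N (n : ℕ) * u m else 0)
      + (if (n : ℕ) + 1 = (m : ℕ) then aEnt N ((m : ℕ)) * u m else 0)) := by
    intro m
    unfold jacobiMatrix
    rcases lt_trichotomy ((n : ℕ)) ((m : ℕ)) with hlt | heq | hgt
    · by_cases h2 : (n : ℕ) + 1 = (m : ℕ) <;>
        simp only [if_neg (by omega : ¬ (n:ℕ) = (m:ℕ)), if_neg (by omega : ¬ (m:ℕ)+1 = (n:ℕ))]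
      · rw [if_pos h2, if_pos h2]; ring
      · rw [if_neg h2, if_neg h2]; ring
    · simp only [if_pos heq, if_neg (by omega : ¬ (m:ℕ)+1 = (n:ℕ)),
        if_neg (by omega : ¬ (n:ℕ)+1 = (m:ℕ))]
      rw [heq]; ring
    · by_cases h2 : (m : ℕ) + 1 = (n : ℕ) <;>
        simp only [if_neg (by omega : ¬ (n:ℕ) = (m:ℕ)), if_neg (by omega : ¬ (n:ℕ)+1 = (m:ℕ))]
      · rw [if_pos h2, if_pos h2]; ring
      · rw [if_neg h2, if_neg h2]; ring
  unfold Matrix.mulVec dotProduct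
  simp only [hsplit, Finset.sum_add_distrib]
  have s1 : (∑ m : Fin (N + 1), if (n : ℕ) = (m : ℕ) then bEnt N (n : ℕ) * u m else 0)
      = bEnt N (n : ℕ) * u n := by
    rw [Finset.sum_eq_single n]
    · simp
    · intro m _ hm
      rw [if_neg (fun hc => hm (Fin.ext hc.symm))]
    · intro hn; exact absurd (Finset.mem_univ n) hn
  have s2 : (∑ m : Fin (N + 1), if ((m : ℕ)) + 1 = (n : ℕ) then aEnt N (n : ℕ) * u m else 0)
      = aEnt N (n : ℕ) * extc N u ((n : ℕ) - 1) := by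
    rcases Nat.eq_zero_or_pos (n : ℕ) with h0 | h0
    · rw [Finset.sum_eq_zero]
      · rw [h0]; simp [aEnt_zero]
      · intro m _; rw [if_neg (by omega)]
    · rw [Finset.sum_eq_single (⟨(n : ℕ) - 1, by omega⟩ : Fin (N + 1))]
      · rw [if_pos (by simp; omega)]
        unfold extc
        rw [dif_pos (by omega)]
      · intro m _ hm
        rw [if_neg (fun hc => hm (Fin.ext (by simp; omega)))]
      · intro hn; exact absurd (Finset.mem_univ _) hn
  have s3 : (∑ m : Fin (N + 1), if (n : ℕ) + 1 = ((m : ℕ)) then aEnt N ((m : ℕ)) * u m else 0)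
      = aEnt N ((n : ℕ) + 1) * extc N u ((n : ℕ) + 1) := by
    rcases Nat.lt_or_ge ((n : ℕ)) N with hlt | hge
    · rw [Finset.sum_eq_single (⟨(n : ℕ) + 1, by omega⟩ : Fin (N + 1))]
      · rw [if_pos (by simp)]
        unfold extc
        rw [dif_pos (by omega)]
      · intro m _ hm
        rw [if_neg (fun hc => hm (Fin.ext (by simp; omega)))]
      · intro hn; exact absurd (Finset.mem_univ _) hn
    · have hn : (n : ℕ) = N := by omega
      rw [Finset.sum_eq_zero]
      · rw [hn, aEnt_top]; ring
      · intro m _; rw [if_neg (by omega)]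
  rw [s1, s2, s3]
  ring

lemma jac_symm (N : ℕ) (m n : Fin (N + 1)) : jacobiMatrix N m n = jacobiMatrix N n m := by
  unfold jacobiMatrix
  split_ifs <;> first | rfl | omega | (congr 1 <;> omega)

lemma commute_JT (N : ℕ) :
    jacobiMatrix N * pascalMatrix ℂ N = pascalMatrix ℂ N * jacobiMatrix N := by
  ext j k
  have hJT : (jacobiMatrix N * pascalMatrix ℂ N) j k
      = (jacobiMatrix N).mulVec (fun m => pascalMatrix ℂ N m k) j := by
    rw [Matrix.mul_apply]; rfl
  have hTJ : (pascalMatrix ℂ N * jacobiMatrix N) j k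
      = (jacobiMatrix N).mulVec (fun m => pascalMatrix ℂ N j m) k := by
    rw [Matrix.mul_apply]
    unfold Matrix.mulVec dotProduct
    apply Finset.sum_congr rfl
    intro m _
    simp only [jac_symm N m k]
    ring
  rw [hJT, hTJ, jac_mulVec, jac_mulVec]
  have hc : (Nat.choose ((j : ℕ) + (k : ℕ)) (j : ℕ) : ℂ)
      = (Nat.choose ((j : ℕ) + (k : ℕ)) (k : ℕ) : ℂ) := by
    norm_cast
    rw [← Nat.choose_symm (by omega : (j:ℕ) ≤ (j:ℕ) + (k:ℕ))]
    congr 1; omega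
  -- identify each extc term with a binomial coefficient
  have t1 : aEnt N (j : ℕ) * extc N (fun m => pascalMatrix ℂ N m k) ((j : ℕ) - 1)
      = aEnt N (j : ℕ) * (Nat.choose ((j : ℕ) + (k : ℕ) - 1) (k : ℕ) : ℂ) := by
    rcases Nat.eq_zero_or_pos (j : ℕ) with h0 | h0
    · rw [h0, aEnt_zero]; ring
    · unfold extc pascalMatrix
      rw [dif_pos (by omega)]
      have hn : Nat.choose (((j:ℕ) - 1) + (k:ℕ)) ((j:ℕ) - 1)
          = Nat.choose ((j:ℕ) + (k:ℕ) - 1) (k:ℕ) := by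
        rw [← Nat.choose_symm (by omega : (j:ℕ) - 1 ≤ ((j:ℕ) - 1) + (k:ℕ))]
        congr 1 <;> omega
      show aEnt N (j:ℕ) * ((Nat.choose (((j:ℕ) - 1) + (k:ℕ)) ((j:ℕ) - 1) : ℕ) : ℂ) = _
      rw [hn]
  have t2 : aEnt N ((j : ℕ) + 1) * extc N (fun m => pascalMatrix ℂ N m k) ((j : ℕ) + 1)
      = aEnt N ((j : ℕ) + 1) * (Nat.choose ((j : ℕ) + (k : ℕ) + 1) (k : ℕ) : ℂ) := by
    rcases Nat.lt_or_ge ((j : ℕ)) N with hlt | hge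
    · unfold extc pascalMatrix
      rw [dif_pos (by omega)]
      have hn : Nat.choose (((j:ℕ) + 1) + (k:ℕ)) ((j:ℕ) + 1)
          = Nat.choose ((j:ℕ) + (k:ℕ) + 1) (k:ℕ) := by
        rw [← Nat.choose_symm (by omega : (j:ℕ) + 1 ≤ ((j:ℕ) + 1) + (k:ℕ))]
        congr 1 <;> omega
      show aEnt N ((j:ℕ) + 1) * ((Nat.choose (((j:ℕ) + 1) + (k:ℕ)) ((j:ℕ) + 1) : ℕ) : ℂ) = _
      rw [hn]
    · have : (j : ℕ) = N := by omega
      rw [this, aEnt_top]; ring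
  have t3 : aEnt N (k : ℕ) * extc N (fun m => pascalMatrix ℂ N j m) ((k : ℕ) - 1)
      = aEnt N (k : ℕ) * (Nat.choose ((j : ℕ) + (k : ℕ) - 1) (j : ℕ) : ℂ) := by
    rcases Nat.eq_zero_or_pos (k : ℕ) with h0 | h0
    · rw [h0, aEnt_zero]; ring
    · unfold extc pascalMatrix
      rw [dif_pos (by omega)]
      have hn : Nat.choose ((j:ℕ) + ((k:ℕ) - 1)) (j:ℕ)
          = Nat.choose ((j:ℕ) + (k:ℕ) - 1) (j:ℕ) := by
        congr 1; omega
      show aEnt N (k:ℕ) * ((Nat.choose ((j:ℕ) + ((k:ℕ) - 1)) (j:ℕ) : ℕ) : ℂ) = _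
      rw [hn]
  have t4 : aEnt N ((k : ℕ) + 1) * extc N (fun m => pascalMatrix ℂ N j m) ((k : ℕ) + 1)
      = aEnt N ((k : ℕ) + 1) * (Nat.choose ((j : ℕ) + (k : ℕ) + 1) (j : ℕ) : ℂ) := by
    rcases Nat.lt_or_ge ((k : ℕ)) N with hlt | hge
    · unfold extc pascalMatrix
      rw [dif_pos (by omega)]
      show aEnt N ((k:ℕ) + 1) * ((Nat.choose ((j:ℕ) + ((k:ℕ) + 1)) (j:ℕ) : ℕ) : ℂ) = _
      rw [show (j:ℕ) + ((k:ℕ) + 1) = (j:ℕ) + (k:ℕ) + 1 by omega]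
    · have : (k : ℕ) = N := by omega
      rw [this, aEnt_top]; ring
  rw [t1, t2, t3, t4]
  show _ + bEnt N (j:ℕ) * pascalMatrix ℂ N j k + _
      = _ + bEnt N (k:ℕ) * pascalMatrix ℂ N j k + _
  unfold pascalMatrix
  rw [hc]
  have hk := key_symm N (j : ℕ) (k : ℕ)
  rw [hc] at hk
  exact hk

lemma vanish (N : ℕ) (μ : ℂ) (u : Fin (N + 1) → ℂ)
    (hu : (jacobiMatrix N).mulVec u = μ • u) (h0 : u 0 = 0) : u = 0 := by
  have hext : ∀ i : ℕ, extc N u i = 0 := by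
    intro i
    induction i using Nat.strong_induction_on with
    | _ i ih =>
      rcases Nat.lt_or_ge i (N + 1) with hi | hi
      · rcases Nat.eq_zero_or_pos i with rfl | hpos
        · unfold extc
          rw [dif_pos (by omega)]
          have : (⟨0, by omega⟩ : Fin (N + 1)) = 0 := rfl
          rw [this, h0]
        · -- use row equation at n = i - 1
          set n : Fin (N + 1) := ⟨i - 1, by omega⟩ with hn
          have hrow := jac_mulVec N u n
          have heq : (jacobiMatrix N).mulVec u n = μ * u n := by
            rw [hu]; rfl
          rw [heq] at hrow
          have hun : u n = extc N u (i - 1) := by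
            unfold extc
            rw [dif_pos (by omega)]
          have hv1 : ((n : ℕ)) = i - 1 := rfl
          rw [hv1] at hrow
          have h1 : extc N u (i - 1 - 1) = 0 := ih _ (by omega)
          have h2 : extc N u (i - 1) = 0 := ih _ (by omega)
          have h3 : i - 1 + 1 = i := by omega
          rw [hun, h1, h2, h3] at hrow
          have : aEnt N i * extc N u i = 0 := by linear_combination -hrow
          have hne : aEnt N i ≠ 0 := aEnt_ne_zero N i (by omega) (by omega)
          exact (mul_eq_zero.mp this).resolve_left hne
      · unfold extc
        rw [dif_neg (by omega)]
  funext m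
  have := hext (m : ℕ)
  unfold extc at this
  rw [dif_pos m.isLt] at this
  simpa using this

theorem stmt2 (N : ℕ) (v : Fin (N + 1) → ℂ) (hv : v ≠ 0) (μ : ℂ)
    (h : (jacobiMatrix N).mulVec v = μ • v) :
    ∃ lam : ℂ, (pascalMatrix ℂ N).mulVec v = lam • v := by
  set T := pascalMatrix ℂ N with hT
  set w := T.mulVec v with hw
  have hJw : (jacobiMatrix N).mulVec w = μ • w := by
    rw [hw, Matrix.mulVec_mulVec, commute_JT, ← Matrix.mulVec_mulVec, h,
      Matrix.mulVec_smul]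
  have hv0 : v 0 ≠ 0 := fun hc => hv (vanish N μ v h hc)
  refine ⟨w 0 / v 0, ?_⟩
  have hz : w - (w 0 / v 0) • v = 0 := by
    apply vanish N μ
    · rw [Matrix.mulVec_sub, Matrix.mulVec_smul, hJw, h]
      funext i
      simp only [Pi.sub_apply, Pi.smul_apply, smul_eq_mul]
      ring
    · simp only [Pi.sub_apply, Pi.smul_apply, smul_eq_mul]
      field_simp
      ring
  exact sub_eq_zero.mp hz
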